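/- If two chain endomorphisms F, G of a bounded complex A over a linear category 𝒞 are chain homotopic, then their traced Lefschetz numbers agree: Σᵢ (−1)ⁱ [Fᵢ] = Σᵢ (−1)ⁱ [Gᵢ] in Tr(𝒞). -/

import Mathlib

open CategoryTheory
open scoped DirectSum Classical

noncomputable section

/-- The relations `f ≫ g - g ≫ f` defining the trace of a linear category. -/
def traceRelations (C : Type*) [Category C] [Preadditive C] :
    AddSubgroup (⨁ x : C, (x ⟶ x)) :=
  AddSubgroup.closure
    { h | ∃ (x y : C) (f : x ⟶ y) (g : y ⟶ x),
        h = DirectSum.of (fun z : C => z ⟶ z) x (f ≫ g)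
          - DirectSum.of (fun z : C => z ⟶ z) y (g ≫ f) }

/-- The trace of a linear category, `Tr(𝒞) = (⊕_x 𝒞(x,x)) / Span{fg − gf}`. -/
abbrev CatTrace (C : Type*) [Category C] [Preadditive C] :=
  (⨁ x : C, (x ⟶ x)) ⧸ traceRelations C

/-- The class `[f]` of an endomorphism in the trace of the category. -/
def traceClass {C : Type*} [Category C] [Preadditive C] {x : C} (f : x ⟶ x) :
    CatTrace C :=
  QuotientAddGroup.mk (DirectSum.of (fun z : C => z ⟶ z) x f)

open CategoryTheory.Limits

lemma traceClass_add {C : Type*} [Category C] [Preadditive C] {x : C} (f g : x ⟶ x) :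
    traceClass (f + g) = traceClass f + traceClass g := by
  simp [traceClass, map_add, QuotientAddGroup.mk_add]

lemma traceClass_zero {C : Type*} [Category C] [Preadditive C] (x : C) :
    traceClass (0 : x ⟶ x) = 0 := by
  simp [traceClass, map_zero]

lemma traceClass_comm {C : Type*} [Category C] [Preadditive C] {x y : C}
    (f : x ⟶ y) (g : y ⟶ x) :
    traceClass (f ≫ g) = traceClass (g ≫ f) := by
  refine (QuotientAddGroup.eq).mpr ?_
  have hm : DirectSum.of (fun z : C => z ⟶ z) x (f ≫ g)
      - DirectSum.of (fun z : C => z ⟶ z) y (g ≫ f) ∈ traceRelations C :=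
    AddSubgroup.subset_closure ⟨x, y, f, g, rfl⟩
  have hm2 := neg_mem hm
  rw [neg_sub] at hm2
  simpa [neg_add_eq_sub] using hm2

/-- If two chain endomorphisms `F, G` of a bounded complex `A` over a linear
category `𝒞` are chain homotopic, then their traced Lefschetz numbers agree:
`Σᵢ (−1)ⁱ [Fᵢ] = Σᵢ (−1)ⁱ [Gᵢ]` in `Tr(𝒞)`. -/
theorem lefschetz_homotopy_invariant {C : Type*} [Category C] [Preadditive C]
    (A : HomologicalComplex C (ComplexShape.down ℤ))
    (F G : A ⟶ A) (h : Homotopy F G)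
    (s : Finset ℤ) (hbd : ∀ i ∉ s, IsZero (A.X i)) :
    ∑ i ∈ s, (Int.negOnePow i : ℤ) • traceClass (F.f i) =
      ∑ i ∈ s, (Int.negOnePow i : ℤ) • traceClass (G.f i) := by
  set P : ℤ → CatTrace C := fun j => traceClass (prevD j h.hom) with hP
  have key : ∀ i : ℤ, traceClass (F.f i) =
      P (i - 1) + P i + traceClass (G.f i) := by
    intro i
    have hc := h.comm i
    rw [hc, traceClass_add, traceClass_add]
    congr 2
    rw [dNext_eq h.hom (i := i) (i' := i - 1)
        (by simp only [ComplexShape.down_Rel]; omega),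
      traceClass_comm, hP]
    dsimp only
    rw [prevD_eq h.hom (j := i - 1) (j' := i)
        (by simp only [ComplexShape.down_Rel]; omega)]
  set T : Finset ℤ := s ∪ s.image (· - 1) with hT
  have h1 : ∑ i ∈ s, (Int.negOnePow i : ℤ) • P i
      = ∑ i ∈ T, (Int.negOnePow i : ℤ) • P i := by
    apply Finset.sum_subset Finset.subset_union_left
    intro i _ hi
    have hz : prevD i h.hom = 0 := (hbd i hi).eq_of_src _ _
    simp only [hP]
    rw [hz, traceClass_zero, smul_zero]
  have h3 : ∑ i ∈ s, (Int.negOnePow (i - 1) : ℤ) • P (i - 1)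
      = ∑ j ∈ s.image (· - 1), (Int.negOnePow j : ℤ) • P j := by
    rw [Finset.sum_image]
    intro a _ b _ hab
    have hab' : a - 1 = b - 1 := hab
    omega
  have h2 : ∑ j ∈ s.image (· - 1), (Int.negOnePow j : ℤ) • P j
      = ∑ j ∈ T, (Int.negOnePow j : ℤ) • P j := by
    apply Finset.sum_subset Finset.subset_union_right
    intro j _ hj
    have hj1 : j + 1 ∉ s := by
      intro hmem
      exact hj (Finset.mem_image.2 ⟨j + 1, hmem, by omega⟩)
    have hz : h.hom j (j + 1) = 0 := (hbd _ hj1).eq_of_tgt _ _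
    have hz2 : prevD j h.hom = 0 := by
      rw [prevD_eq h.hom (j := j) (j' := j + 1)
        (by simp only [ComplexShape.down_Rel]), hz, Limits.zero_comp]
    simp only [hP]
    rw [hz2, traceClass_zero, smul_zero]
  calc ∑ i ∈ s, (Int.negOnePow i : ℤ) • traceClass (F.f i)
      = ∑ i ∈ s, ((Int.negOnePow i : ℤ) • P (i - 1)
          + (Int.negOnePow i : ℤ) • P i
          + (Int.negOnePow i : ℤ) • traceClass (G.f i)) := by
        refine Finset.sum_congr rfl fun i _ => ?_
        rw [key i, smul_add, smul_add]
    _ = ∑ i ∈ s, (Int.negOnePow i : ℤ) • P (i - 1)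
          + ∑ i ∈ s, (Int.negOnePow i : ℤ) • P i
          + ∑ i ∈ s, (Int.negOnePow i : ℤ) • traceClass (G.f i) := by
        rw [Finset.sum_add_distrib, Finset.sum_add_distrib]
    _ = ∑ i ∈ s, (Int.negOnePow i : ℤ) • traceClass (G.f i) := by
        have hsign : ∀ i : ℤ, (Int.negOnePow i : ℤ) • P (i - 1)
            = -((Int.negOnePow (i - 1) : ℤ) • P (i - 1)) := by
          intro i
          have e : i = (i - 1) + 1 := by omega
          rw [← neg_smul]
          congr 1
          conv_lhs => rw [e]
          rw [Int.negOnePow_succ, Units.val_neg]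
        have hneg : ∑ i ∈ s, (Int.negOnePow i : ℤ) • P (i - 1)
            = -∑ i ∈ s, (Int.negOnePow (i - 1) : ℤ) • P (i - 1) := by
          rw [← Finset.sum_neg_distrib]
          exact Finset.sum_congr rfl fun i _ => hsign i
        rw [hneg, h3, h2, h1]
        abel
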